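/- Let g : S1 × S2 → A be a two-person game form that is ±1-solvable: for every function u : A → {+1,-1} the zero-sum game with payoff u to player 1 and -u to player 2 has a saddle point. Then g is zero-sum solvable: for every u : A → ℝ the zero-sum game (u, -u) has a saddle point. -/
import Mathlib


/-- ±1-solvability of a two-person game form implies zero-sum solvability. -/
theorem pm_one_solvable_implies_zero_sum_solvable
    {S1 S2 A : Type*} [Fintype S1] [Fintype S2] [Fintype A]
    [Nonempty S1] [Nonempty S2]
    (g : S1 → S2 → A)
    (hPM : ∀ u : A → ℝ, (∀ a : A, u a = 1 ∨ u a = -1) →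
      ∃ (s1 : S1) (s2 : S2),
        (∀ t1 : S1, u (g t1 s2) ≤ u (g s1 s2)) ∧
        (∀ t2 : S2, u (g s1 s2) ≤ u (g s1 t2))) :
    ∀ u : A → ℝ, ∃ (s1 : S1) (s2 : S2),
      (∀ t1 : S1, u (g t1 s2) ≤ u (g s1 s2)) ∧
      (∀ t2 : S2, u (g s1 s2) ≤ u (g s1 t2)) := by
  intro u
  have h1 : (Finset.univ : Finset S1).Nonempty := Finset.univ_nonempty
  have h2 : (Finset.univ : Finset S2).Nonempty := Finset.univ_nonempty
  set minRow : S1 → ℝ := fun s1 => Finset.univ.inf' h2 (fun s2 => u (g s1 s2)) with hminRow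
  set maxCol : S2 → ℝ := fun s2 => Finset.univ.sup' h1 (fun s1 => u (g s1 s2)) with hmaxCol
  set M : ℝ := Finset.univ.sup' h1 minRow with hM
  set m : ℝ := Finset.univ.inf' h2 maxCol with hm
  have hMle : M ≤ m := by
    apply Finset.sup'_le
    intro s1 _
    apply Finset.le_inf'
    intro s2 _
    calc minRow s1 ≤ u (g s1 s2) := Finset.inf'_le _ (Finset.mem_univ _)
      _ ≤ maxCol s2 := Finset.le_sup' (fun t => u (g t s2)) (Finset.mem_univ s1)
  have hmle : m ≤ M := by
    by_contra hlt
    push_neg at hlt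
    set v : A → ℝ := fun a => if m ≤ u a then 1 else -1 with hv
    obtain ⟨s1, s2, hrow, hcol⟩ := hPM v (fun a => by
      by_cases h : m ≤ u a <;> simp [hv, h])
    by_cases hc : m ≤ u (g s1 s2)
    · -- row s1 is everywhere ≥ m
      have hminR : m ≤ minRow s1 := by
        apply Finset.le_inf'
        intro t2 _
        have := hcol t2
        simp only [hv] at this
        rw [if_pos hc] at this
        by_contra hlt2
        push_neg at hlt2
        rw [if_neg (not_le.mpr hlt2)] at this
        linarith
      have : minRow s1 ≤ M := Finset.le_sup' _ (Finset.mem_univ _)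
      linarith
    · -- column s2 is everywhere < m
      have hmaxC : maxCol s2 < m := by
        have hlt3 : ∀ t1 : S1, u (g t1 s2) < m := by
          intro t1
          have := hrow t1
          simp only [hv] at this
          rw [if_neg hc] at this
          by_contra hge
          push_neg at hge
          rw [if_pos hge] at this
          linarith
        apply (Finset.sup'_lt_iff h1).mpr
        intro t1 _
        exact hlt3 t1
      have : m ≤ maxCol s2 := Finset.inf'_le _ (Finset.mem_univ _)
      linarith
  have hMm : M = m := le_antisymm hMle hmle
  obtain ⟨s1, -, hs1⟩ := Finset.exists_mem_eq_sup' h1 minRow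
  obtain ⟨s2, -, hs2⟩ := Finset.exists_mem_eq_inf' h2 maxCol
  have e1 : minRow s1 = M := by rw [hM, hs1]
  have e2 : maxCol s2 = m := by rw [hm, hs2]
  refine ⟨s1, s2, ?_, ?_⟩
  · intro t1
    have hub : u (g t1 s2) ≤ maxCol s2 := Finset.le_sup' (fun t => u (g t s2)) (Finset.mem_univ t1)
    have hlow : minRow s1 ≤ u (g s1 s2) := Finset.inf'_le _ (Finset.mem_univ _)
    linarith
  · intro t2
    have hub : u (g s1 s2) ≤ maxCol s2 := Finset.le_sup' (fun t => u (g t s2)) (Finset.mem_univ s1)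
    have hlow : minRow s1 ≤ u (g s1 t2) := Finset.inf'_le _ (Finset.mem_univ _)
    linarith
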